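/- Let (𝔫,⟨·,·⟩) be a metrized Lie algebra with γ_𝔫 ∈ S²𝔫 dual to the metric, 𝔲 ⊆ 𝔫 a Lagrangian Lie subalgebra, 𝔡 a Lie algebra with ad-invariant β ∈ S²𝔡, and f_𝔫 : 𝔫 → 𝔡 a Lie algebra morphism with f_𝔫(γ_𝔫) = β, such that f_𝔫 restricts to an isomorphism of 𝔲 onto 𝔠 := f_𝔫(𝔲). Then the map 𝔫 → (𝔠 ⋉ 𝔡*_β)/(𝔠 ⋉ 𝔡*_β)^⊥, sending ζ + f_𝔫*(μ) ↦ [f_𝔫(ζ) + μ] (for ζ ∈ 𝔲, μ ∈ 𝔡*), is a well-defined isomorphism of metrized Lie algebras carrying 𝔲 onto the image of 𝔠. -/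

import Mathlib

/-- The coadjoint action: `⟨ad*_x μ, y⟩ = −⟨μ, [x,y]⟩`. -/
noncomputable def coad (K : Type*) [Field K] (𝔡 : Type*) [LieRing 𝔡] [LieAlgebra K 𝔡]
    (x : 𝔡) (μ : Module.Dual K 𝔡) : Module.Dual K 𝔡 :=
  -(μ.comp (LieAlgebra.ad K 𝔡 x : 𝔡 →ₗ[K] 𝔡))

/-- The bracket of the semidirect product Lie algebra `𝔡̃ = 𝔡 ⋉ 𝔡*_β`. -/
noncomputable def sdBracket (K : Type*) [Field K] (𝔡 : Type*) [LieRing 𝔡] [LieAlgebra K 𝔡]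
    (βsharp : Module.Dual K 𝔡 →ₗ[K] 𝔡) (p q : 𝔡 × Module.Dual K 𝔡) :
    𝔡 × Module.Dual K 𝔡 :=
  (⁅p.1, q.1⁆, coad K 𝔡 p.1 q.2 - coad K 𝔡 q.1 p.2 + coad K 𝔡 (βsharp p.2) q.2)

/-- The canonical metric of `𝔡̃ = 𝔡 ⋉ 𝔡*_β`:
`⟨λ₁+μ₁, λ₂+μ₂⟩ = ⟨λ₁,μ₂⟩ + ⟨λ₂,μ₁⟩ + β(μ₁,μ₂)`. -/
def BtFun (K : Type*) [Field K] (𝔡 : Type*) [AddCommGroup 𝔡] [Module K 𝔡]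
    (β : LinearMap.BilinForm K (Module.Dual K 𝔡)) (p q : 𝔡 × Module.Dual K 𝔡) : K :=
  q.2 p.1 + p.2 q.1 + β p.2 q.2

/-- The orthogonal complement, with respect to the metric of `𝔡̃`, of a subspace
`C ⊆ 𝔡̃ = 𝔡 ⋉ 𝔡*_β`. -/
def Bperp (K : Type*) [Field K] (𝔡 : Type*) [AddCommGroup 𝔡] [Module K 𝔡]
    (β : LinearMap.BilinForm K (Module.Dual K 𝔡)) (C : Submodule K (𝔡 × Module.Dual K 𝔡)) :
    Submodule K (𝔡 × Module.Dual K 𝔡) where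
  carrier := {p | ∀ c ∈ C, BtFun K 𝔡 β p c = 0}
  add_mem' := by
    intro a b ha hb
    intro c hc
    have h1 := ha c hc
    have h2 := hb c hc
    simp only [BtFun, Prod.fst_add, Prod.snd_add, map_add, LinearMap.add_apply] at *
    linear_combination h1 + h2
  zero_mem' := by
    intro c hc
    simp [BtFun]
  smul_mem' := by
    intro r a ha c hc
    have h1 := ha c hc
    simp only [BtFun, Prod.smul_fst, Prod.smul_snd, map_smul, LinearMap.smul_apply,
      smul_eq_mul] at *
    linear_combination r * h1

set_option maxHeartbeats 2000000

/-- Let `(𝔫,⟨·,·⟩)` be a metrized Lie algebra, `𝔲 ⊆ 𝔫` a Lagrangian Lie subalgebra,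
`𝔡` a Lie algebra with ad-invariant `β ∈ S²𝔡`, and `f𝔫 : 𝔫 → 𝔡` a Lie algebra morphism
with `f𝔫(γ_𝔫) = β` restricting to an isomorphism of `𝔲` onto `𝔠 := f𝔫(𝔲)`.
Then `ζ + f𝔫*(μ) ↦ [f𝔫(ζ) + μ]` is a well-defined isomorphism of metrized Lie algebras
from `𝔫` onto the reduction `(𝔠 ⋉ 𝔡*_β)/(𝔠 ⋉ 𝔡*_β)^⊥` of `𝔡̃ = 𝔡 ⋉ 𝔡*_β`,
carrying `𝔲` onto the image of `𝔠`. -/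
theorem stmt15 {K 𝔫 𝔡 : Type*} [Field K]
    [LieRing 𝔫] [LieAlgebra K 𝔫] [FiniteDimensional K 𝔫]
    [LieRing 𝔡] [LieAlgebra K 𝔡] [FiniteDimensional K 𝔡]
    (B : LinearMap.BilinForm K 𝔫)
    (hBsymm : ∀ x y, B x y = B y x)
    (hBnd : ∀ x, (∀ y, B x y = 0) → x = 0)
    (hBinv : ∀ x y z : 𝔫, B ⁅x, y⁆ z + B y ⁅x, z⁆ = 0)
    (U : Submodule K 𝔫)
    (hULag : ∀ x, x ∈ U ↔ ∀ u ∈ U, B x u = 0)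
    (hUbr : ∀ x ∈ U, ∀ y ∈ U, ⁅x, y⁆ ∈ U)
    (β : LinearMap.BilinForm K (Module.Dual K 𝔡))
    (hβsymm : ∀ μ ν, β μ ν = β ν μ)
    (hβinv : ∀ (x : 𝔡) μ ν, β (coad K 𝔡 x μ) ν + β μ (coad K 𝔡 x ν) = 0)
    (βsharp : Module.Dual K 𝔡 →ₗ[K] 𝔡)
    (hβsharp : ∀ μ ν, ν (βsharp μ) = β μ ν)
    (f : 𝔫 →ₗ[K] 𝔡)
    (hfbr : ∀ x y : 𝔫, f ⁅x, y⁆ = ⁅f x, f y⁆)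
    (fstar : Module.Dual K 𝔡 →ₗ[K] 𝔫)
    (hfstar : ∀ μ x, B (fstar μ) x = μ (f x))
    (hβpush : ∀ μ ν, β μ ν = B (fstar μ) (fstar ν))
    (hinj : ∀ x ∈ U, f x = 0 → x = 0) :
    -- 𝔠 = f(𝔲) and C = 𝔠 ⋉ 𝔡*_β ⊆ 𝔡̃, with orthogonal P = C^⊥ (an ideal in C)
    let 𝔠 : Submodule K 𝔡 := U.map f
    let C : Submodule K (𝔡 × Module.Dual K 𝔡) :=
      Submodule.comap (LinearMap.fst K 𝔡 (Module.Dual K 𝔡)) 𝔠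
    let P : Submodule K (𝔡 × Module.Dual K 𝔡) := Bperp K 𝔡 β C
    ∃ g : 𝔫 →ₗ[K] ((𝔡 × Module.Dual K 𝔡) ⧸ P),
      -- the map is ζ + f*(μ) ↦ [f(ζ) + μ], and is in particular well-defined
      (∀ ζ ∈ U, ∀ μ : Module.Dual K 𝔡, g (ζ + fstar μ) = Submodule.Quotient.mk (f ζ, μ))
      -- it is injective, with image the reduction (𝔠 ⋉ 𝔡*_β)/(𝔠 ⋉ 𝔡*_β)^⊥
      ∧ Function.Injective g
      ∧ (∀ p ∈ C, ∃ x : 𝔫, g x = Submodule.Quotient.mk p)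
      ∧ (∀ x : 𝔫, ∃ p ∈ C, g x = Submodule.Quotient.mk p)
      -- it preserves the metrics and the Lie brackets
      ∧ (∀ x y : 𝔫, ∀ p ∈ C, ∀ q ∈ C,
          g x = Submodule.Quotient.mk p → g y = Submodule.Quotient.mk q →
            BtFun K 𝔡 β p q = B x y
            ∧ g ⁅x, y⁆ = Submodule.Quotient.mk (sdBracket K 𝔡 βsharp p q))
      -- it carries 𝔲 onto the image of 𝔠
      ∧ Submodule.map g U =
          Submodule.map ((P.mkQ).comp (LinearMap.inl K 𝔡 (Module.Dual K 𝔡))) 𝔠 := by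
  intro 𝔠 C P
  -- membership lemmas
  have hCmem : ∀ p : 𝔡 × Module.Dual K 𝔡, p ∈ C ↔ ∃ u ∈ U, f u = p.1 := by
    intro p
    simp [C, 𝔠, Submodule.mem_comap, Submodule.mem_map]
  have hPdef : ∀ p : 𝔡 × Module.Dual K 𝔡,
      (∀ c ∈ C, BtFun K 𝔡 β p c = 0) → p ∈ P := fun p h => h
  have hPuse : ∀ p, p ∈ P → ∀ c ∈ C, BtFun K 𝔡 β p c = 0 := fun p hp => hp
  -- f ∘ fstar = βsharp
  have ffs : ∀ μ, f (fstar μ) = βsharp μ := by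
    intro μ
    rw [← sub_eq_zero, ← Module.forall_dual_apply_eq_zero_iff K]
    intro ν
    have h1 : ν (f (fstar μ)) = β μ ν := by
      rw [← hfstar, ← hβpush, hβsymm]
    rw [map_sub, h1, hβsharp, sub_self]
  -- annihilator of 𝔠 pulls back into U
  have hannU : ∀ μ : Module.Dual K 𝔡, (∀ u ∈ U, μ (f u) = 0) → fstar μ ∈ U := by
    intro μ h
    rw [hULag]
    intro u hu
    rw [hfstar]
    exact h u hu
  -- key consequences of β-invariance
  have hkey' : ∀ (z : 𝔡) (μ ν : Module.Dual K 𝔡),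
      μ ⁅z, βsharp ν⁆ + ν ⁅z, βsharp μ⁆ = 0 := by
    intro z μ ν
    have h := hβinv z μ ν
    rw [hβsymm (coad K 𝔡 z μ) ν, ← hβsharp, ← hβsharp] at h
    simp only [coad, LinearMap.neg_apply, LinearMap.coe_comp, Function.comp_apply,
      LieAlgebra.ad_apply] at h
    linear_combination -h
  have hkey : ∀ (z : 𝔡) (μ ν : Module.Dual K 𝔡),
      μ ⁅βsharp ν, z⁆ + ν ⁅βsharp μ, z⁆ = 0 := by
    intro z μ ν
    have h := hkey' z μ ν
    have e1 : (⁅βsharp ν, z⁆ : 𝔡) = -⁅z, βsharp ν⁆ := (lie_skew _ _).symm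
    have e2 : (⁅βsharp μ, z⁆ : 𝔡) = -⁅z, βsharp μ⁆ := (lie_skew _ _).symm
    rw [e1, e2, map_neg, map_neg]
    linear_combination -h
  -- fstar intertwines coad and the bracket
  have hcoadf : ∀ (z : 𝔫) (ν : Module.Dual K 𝔡),
      fstar (coad K 𝔡 (f z) ν) = ⁅z, fstar ν⁆ := by
    intro z ν
    have h : ∀ y, B (fstar (coad K 𝔡 (f z) ν) - ⁅z, fstar ν⁆) y = 0 := by
      intro y
      rw [map_sub, LinearMap.sub_apply, hfstar]
      have h2 := hBinv z (fstar ν) y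
      rw [hfstar, hfbr] at h2
      simp only [coad, LinearMap.neg_apply, LinearMap.coe_comp, Function.comp_apply,
        LieAlgebra.ad_apply]
      linear_combination -h2
    have := hBnd _ h
    rwa [sub_eq_zero] at this
  -- structure of elements of P
  have hPC : ∀ p : 𝔡 × Module.Dual K 𝔡, p ∈ P →
      p.1 = f (-(fstar p.2)) ∧ fstar p.2 ∈ U := by
    intro p hp
    have hann : ∀ u ∈ U, p.2 (f u) = 0 := by
      intro u hu
      have h := hPuse p hp (f u, 0) ((hCmem _).mpr ⟨u, hu, rfl⟩)
      simpa [BtFun] using h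
    have hfU : fstar p.2 ∈ U := hannU _ hann
    have h1 : ∀ ν : Module.Dual K 𝔡, ν (p.1 + βsharp p.2) = 0 := by
      intro ν
      have h := hPuse p hp (0, ν) ((hCmem _).mpr ⟨0, zero_mem _, by simp⟩)
      simp only [BtFun] at h
      rw [map_add, hβsharp]
      simpa using h
    have h2 : p.1 + βsharp p.2 = 0 := (Module.forall_dual_apply_eq_zero_iff K _).mp h1
    refine ⟨?_, hfU⟩
    rw [map_neg, ffs]
    exact eq_neg_of_add_eq_zero_left h2
  -- C is closed under the bracket
  have hCbr : ∀ a ∈ C, ∀ b ∈ C, sdBracket K 𝔡 βsharp a b ∈ C := by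
    intro a ha b hb
    obtain ⟨u, hu, hua⟩ := (hCmem a).mp ha
    obtain ⟨v, hv, hvb⟩ := (hCmem b).mp hb
    exact (hCmem _).mpr ⟨⁅u, v⁆, hUbr u hu v hv, by simp only [sdBracket]; rw [hfbr, hua, hvb]⟩
  -- evaluation of β against coad
  have hbeval : ∀ (w : 𝔡) (μ' ν' : Module.Dual K 𝔡),
      β (coad K 𝔡 w μ') ν' = -μ' ⁅w, βsharp ν'⁆ := by
    intro w μ' ν'
    rw [hβsymm, ← hβsharp]
    simp [coad]
  have hbeval2 : ∀ (w : 𝔡) (μ' ν' : Module.Dual K 𝔡),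
      β ν' (coad K 𝔡 w μ') = -μ' ⁅w, βsharp ν'⁆ := by
    intro w μ' ν'
    rw [← hβsharp]
    simp [coad]
  -- invariance of the metric of 𝔡̃
  have hinvt : ∀ a b c : 𝔡 × Module.Dual K 𝔡,
      BtFun K 𝔡 β (sdBracket K 𝔡 βsharp a b) c
        + BtFun K 𝔡 β b (sdBracket K 𝔡 βsharp a c) = 0 := by
    intro ⟨x, μ⟩ ⟨y, ν⟩ ⟨z, ρ⟩
    have hswap : ∀ (φ : Module.Dual K 𝔡) (a b : 𝔡), φ ⁅a, b⁆ = -φ ⁅b, a⁆ := by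
      intro φ a b
      rw [← lie_skew, map_neg]
    simp only [BtFun, sdBracket, map_add, map_sub, LinearMap.add_apply, LinearMap.sub_apply,
      hbeval, hbeval2]
    simp only [coad, LinearMap.neg_apply, LinearMap.coe_comp, Function.comp_apply,
      LieAlgebra.ad_apply]
    linear_combination hswap μ y z + hkey' z μ ν - hswap ν (βsharp μ) z - hkey' x ν ρ
      + hkey' y μ ρ - hswap ρ (βsharp μ) y - hkey' (βsharp μ) ν ρ
  -- antisymmetry of the bracket of 𝔡̃
  have hanti : ∀ a b : 𝔡 × Module.Dual K 𝔡,
      sdBracket K 𝔡 βsharp a b = -sdBracket K 𝔡 βsharp b a := by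
    intro ⟨x, μ⟩ ⟨y, ν⟩
    have h1 : (⁅x, y⁆ : 𝔡) = -⁅y, x⁆ := (lie_skew _ _).symm
    refine Prod.ext (by simpa [sdBracket] using h1) ?_
    show _ = -(_ : Module.Dual K 𝔡)
    ext z
    have h := hkey z μ ν
    simp only [sdBracket, coad, LinearMap.neg_apply, LinearMap.add_apply, LinearMap.sub_apply,
      LinearMap.coe_comp, Function.comp_apply, LieAlgebra.ad_apply]
    linear_combination -h
  -- bilinearity-type identity for the bracket of 𝔡̃
  have hbil : ∀ p q w w' : 𝔡 × Module.Dual K 𝔡,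
      sdBracket K 𝔡 βsharp p q - sdBracket K 𝔡 βsharp w w'
        = sdBracket K 𝔡 βsharp (p - w) q + sdBracket K 𝔡 βsharp w (q - w') := by
    intro p q w w'
    refine Prod.ext ?_ ?_
    · show (⁅p.1, q.1⁆ : 𝔡) - ⁅w.1, w'.1⁆ = ⁅p.1 - w.1, q.1⁆ + ⁅w.1, q.1 - w'.1⁆
      rw [sub_lie, lie_sub]
      abel
    · show _ = (_ : Module.Dual K 𝔡)
      ext z
      simp only [sdBracket, Prod.fst_sub, Prod.snd_sub, Prod.snd_add, coad, map_sub, map_add,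
        LinearMap.neg_apply, LinearMap.add_apply, LinearMap.sub_apply, LinearMap.coe_comp,
        Function.comp_apply, LieAlgebra.ad_apply, sub_lie, lie_sub, map_neg]
      ring
  -- P is an ideal of C
  have hIdeal : ∀ a ∈ C, ∀ r ∈ P, sdBracket K 𝔡 βsharp a r ∈ P
      ∧ sdBracket K 𝔡 βsharp r a ∈ P := by
    intro a ha r hr
    have h1 : sdBracket K 𝔡 βsharp a r ∈ P := by
      apply hPdef
      intro c hc
      have h := hinvt a r c
      have h2 := hPuse r hr _ (hCbr a ha c hc)
      linear_combination h - h2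
    refine ⟨h1, ?_⟩
    rw [hanti]
    exact neg_mem h1
  -- the two linear maps
  set Ψ : (↥U × Module.Dual K 𝔡) →ₗ[K] 𝔫 := (U.subtype).coprod fstar with hΨdef
  set Θ : (↥U × Module.Dual K 𝔡) →ₗ[K] 𝔡 × Module.Dual K 𝔡 :=
    (f.comp U.subtype).prodMap LinearMap.id with hΘdef
  have hΨ : ∀ w : ↥U × Module.Dual K 𝔡, Ψ w = ↑w.1 + fstar w.2 := fun w => rfl
  have hΘ : ∀ w : ↥U × Module.Dual K 𝔡, Θ w = (f ↑w.1, w.2) := fun w => rfl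
  have hΘC : ∀ w, Θ w ∈ C := by
    intro w
    rw [hCmem]
    exact ⟨↑w.1, w.1.2, rfl⟩
  -- kernel correspondence
  have hker : ∀ w : ↥U × Module.Dual K 𝔡, Ψ w = 0 → Θ w ∈ P := by
    intro w hw
    rw [hΨ] at hw
    have hζ : (w.1 : 𝔫) = -(fstar w.2) := eq_neg_of_add_eq_zero_left hw
    apply hPdef
    intro c hc
    obtain ⟨u, hu, huc⟩ := (hCmem c).mp hc
    rw [hΘ]
    simp only [BtFun]
    have e1 : c.2 (f ↑w.1) = -β w.2 c.2 := by
      rw [← hfstar, hζ, map_neg, ← hβpush, hβsymm]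
    have e2 : w.2 c.1 = 0 := by
      rw [← huc, ← hfstar]
      have : B (fstar w.2) u = -B (↑w.1) u := by rw [hζ]; simp
      rw [this, (hULag (↑w.1 : 𝔫)).mp w.1.2 u hu, neg_zero]
    rw [e1, e2]
    ring
  have hkerrev : ∀ w : ↥U × Module.Dual K 𝔡, Θ w ∈ P → Ψ w = 0 := by
    intro w hw
    obtain ⟨h1, h2⟩ := hPC _ hw
    rw [hΘ] at h1 h2
    simp only at h1 h2
    have h3 : f (↑w.1 + fstar w.2) = 0 := by
      rw [map_add, h1, map_neg]
      abel
    have h4 : (↑w.1 + fstar w.2 : 𝔫) ∈ U := add_mem w.1.2 h2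
    rw [hΨ]
    exact hinj _ h4 h3
  -- surjectivity of Ψ
  have hBnd' : B.Nondegenerate := ⟨hBnd, fun y hy => hBnd y (fun x => by rw [hBsymm]; exact hy x)⟩
  have hrange : LinearMap.range Ψ = ⊤ := by
    have hann2 : (LinearMap.range Ψ).dualAnnihilator = ⊥ := by
      rw [eq_bot_iff]
      intro φ hφ
      rw [Submodule.mem_dualAnnihilator] at hφ
      set x := (B.toDual hBnd').symm φ with hx
      have hBx : ∀ v, B x v = φ v := fun v =>
        LinearMap.BilinForm.apply_toDual_symm_apply φ v
      have hxz : ∀ w : ↥U × Module.Dual K 𝔡, B x (Ψ w) = 0 := by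
        intro w
        rw [hBx]
        exact hφ _ ⟨w, rfl⟩
      have hxU : x ∈ U := by
        rw [hULag]
        intro u hu
        have := hxz (⟨u, hu⟩, 0)
        simpa [hΨ] using this
      have hfx : f x = 0 := by
        rw [← Module.forall_dual_apply_eq_zero_iff K]
        intro μ
        have := hxz (0, μ)
        rw [hΨ] at this
        simp only [Submodule.coe_zero, zero_add] at this
        rw [← hfstar, hBsymm]
        exact this
      have hx0 : x = 0 := hinj x hxU hfx
      have : φ = B x := by
        ext v
        rw [hBx]
      rw [this, hx0, map_zero]
      simp
    have h := congrArg Submodule.dualCoannihilator hann2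
    rwa [Subspace.dualAnnihilator_dualCoannihilator_eq, Submodule.dualCoannihilator_bot] at h
  obtain ⟨s, hs⟩ := Ψ.exists_rightInverse_of_surjective hrange
  have hΨs : ∀ x, Ψ (s x) = x := fun x => by
    have := LinearMap.ext_iff.mp hs x
    simpa using this
  have hgΨ : ∀ w, (P.mkQ ∘ₗ (Θ ∘ₗ s)) (Ψ w) = Submodule.Quotient.mk (Θ w) := by
    intro w
    simp only [LinearMap.comp_apply, Submodule.mkQ_apply]
    rw [Submodule.Quotient.eq]
    have h0 : Ψ (s (Ψ w) - w) = 0 := by rw [map_sub, hΨs, sub_self]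
    have h := hker _ h0
    rwa [map_sub] at h
  have hgdef : ∀ x, (P.mkQ ∘ₗ (Θ ∘ₗ s)) x = Submodule.Quotient.mk (Θ (s x)) := by
    intro x
    simp only [LinearMap.comp_apply, Submodule.mkQ_apply]
  refine ⟨P.mkQ ∘ₗ (Θ ∘ₗ s), ?_, ?_, ?_, ?_, ?_, ?_⟩
  · -- the formula
    intro ζ hζ μ
    have h := hgΨ (⟨ζ, hζ⟩, μ)
    rw [hΨ, hΘ] at h
    exact h
  · -- injectivity
    intro x y hxy
    rw [hgdef, hgdef] at hxy
    have hP : Θ (s x) - Θ (s y) ∈ P := (Submodule.Quotient.eq P).mp hxy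
    rw [← map_sub] at hP
    have h0 := hkerrev _ hP
    rw [map_sub, hΨs, hΨs, sub_eq_zero] at h0
    exact h0
  · -- surjectivity onto the image of C
    intro p hp
    obtain ⟨u, hu, hup⟩ := (hCmem p).mp hp
    refine ⟨↑(⟨u, hu⟩ : ↥U) + fstar p.2, ?_⟩
    have h := hgΨ ((⟨u, hu⟩ : ↥U), p.2)
    rw [hΨ, hΘ] at h
    refine h.trans ?_
    rw [hup]
  · -- the image lies in the image of C
    intro x
    refine ⟨Θ (s x), hΘC _, ?_⟩
    have h := hgΨ (s x)
    rwa [hΨs] at h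
  · -- the metric and the bracket are preserved
    intro x y p hp q hq hgx hgy
    have hpw : Θ (s x) - p ∈ P := (Submodule.Quotient.eq P).mp ((hgdef x).symm.trans hgx)
    have hqw : Θ (s y) - q ∈ P := (Submodule.Quotient.eq P).mp ((hgdef y).symm.trans hgy)
    have hxe : x = ↑(s x).1 + fstar (s x).2 := by rw [← hΨ, hΨs]
    have hye : y = ↑(s y).1 + fstar (s y).2 := by rw [← hΨ, hΨs]
    constructor
    · -- metric
      have d1 := hPuse _ hpw q hq
      have d2 := hPuse _ hqw (Θ (s x)) (hΘC _)
      simp only [BtFun, Prod.fst_sub, Prod.snd_sub, map_sub, LinearMap.sub_apply] at d1 d2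
      have e2 : BtFun K 𝔡 β (Θ (s x)) (Θ (s y)) = B x y := by
        conv_rhs => rw [hxe, hye]
        rw [hΘ, hΘ]
        simp only [BtFun, map_add, LinearMap.add_apply]
        have b1 : B (↑(s x).1 : 𝔫) ↑(s y).1 = 0 := (hULag _).mp (s x).1.2 _ (s y).1.2
        have b2 : B (↑(s x).1 : 𝔫) (fstar (s y).2) = (s y).2 (f ↑(s x).1) := by
          rw [hBsymm, hfstar]
        have b3 : B (fstar (s x).2) (↑(s y).1 : 𝔫) = (s x).2 (f ↑(s y).1) := hfstar _ _
        have b4 : B (fstar (s x).2) (fstar (s y).2) = β (s x).2 (s y).2 := (hβpush _ _).symm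
        rw [b1, b2, b3, b4]
        ring
      rw [← e2]
      simp only [BtFun]
      linear_combination -d1 - d2 - hβsymm q.2 (Θ (s x)).2 + hβsymm (Θ (s y)).2 (Θ (s x)).2
    · -- bracket
      have hlie : ⁅x, y⁆ = Ψ (⟨⁅(↑(s x).1 : 𝔫), (↑(s y).1 : 𝔫)⁆, hUbr _ (s x).1.2 _ (s y).1.2⟩,
          coad K 𝔡 (f ↑(s x).1) (s y).2 - coad K 𝔡 (f ↑(s y).1) (s x).2
            + coad K 𝔡 (βsharp (s x).2) (s y).2) := by
        rw [hΨ]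
        simp only
        rw [map_add, map_sub, hcoadf, hcoadf, ← ffs ((s x).2), hcoadf]
        conv_lhs => rw [hxe, hye]
        rw [add_lie, lie_add, lie_add]
        rw [show (⁅fstar (s x).2, (↑(s y).1 : 𝔫)⁆ : 𝔫)
          = -⁅(↑(s y).1 : 𝔫), fstar (s x).2⁆ from (lie_skew _ _).symm]
        abel
      have hmk : (P.mkQ ∘ₗ (Θ ∘ₗ s)) ⁅x, y⁆
          = Submodule.Quotient.mk (sdBracket K 𝔡 βsharp (Θ (s x)) (Θ (s y))) := by
        rw [hlie, hgΨ]
        congr 1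
        rw [hΘ, hΘ, hΘ]
        simp only [sdBracket]
        exact Prod.ext (hfbr _ _) rfl
      rw [hmk, Submodule.Quotient.eq, hbil]
      exact add_mem (hIdeal _ (hΘC (s y)) _ hpw).2 (hIdeal p hp _ hqw).1
  · -- U is carried onto the image of 𝔠
    ext q0
    simp only [Submodule.mem_map, LinearMap.comp_apply, LinearMap.inl_apply,
      Submodule.mkQ_apply]
    constructor
    · rintro ⟨ζ, hζ, rfl⟩
      refine ⟨f ζ, ⟨ζ, hζ, rfl⟩, ?_⟩
      have h := hgΨ (⟨ζ, hζ⟩, 0)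
      rw [hΨ, hΘ] at h
      simp only [map_zero, add_zero] at h
      exact h.symm
    · rintro ⟨d, ⟨ζ, hζ, rfl⟩, rfl⟩
      refine ⟨ζ, hζ, ?_⟩
      have h := hgΨ (⟨ζ, hζ⟩, 0)
      rw [hΨ, hΘ] at h
      simp only [map_zero, add_zero] at h
      exact h
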